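/- A real linear operator G : ℝ² → ℝ², identified with a 2×2 real matrix, maps Z[ω] (viewed as a subset of ℝ² ≅ ℂ) into itself if and only if G has the form G = [[a + a'/√2, b + b'/√2], [c + c'/√2, d + d'/√2]] where a, b, c, d, a', b', c', d' are integers satisfying a + b + c + d ≡ 0 (mod 2) and a' ≡ b' ≡ c' ≡ d' (mod 2). -/

import Mathlib

open Matrix

/-- Z[ω] viewed as a subset of ℝ²: vectors (x₁ + x₂/√2, y₁ + y₂/√2) with
    integer x₁, x₂, y₁, y₂ and x₂ ≡ y₂ (mod 2). -/
noncomputable def Zomega2 : Set (Fin 2 → ℝ) :=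
  {u | ∃ x₁ x₂ y₁ y₂ : ℤ,
    u 0 = (x₁ : ℝ) + (x₂ : ℝ) / Real.sqrt 2 ∧
    u 1 = (y₁ : ℝ) + (y₂ : ℝ) / Real.sqrt 2 ∧ x₂ % 2 = y₂ % 2}

lemma sqrt2_lin (m n : ℤ) (h : (m:ℝ) * Real.sqrt 2 = n) : m = 0 ∧ n = 0 := by
  have hm : m = 0 := by
    by_contra hm
    have hm' : (m:ℝ) ≠ 0 := Int.cast_ne_zero.mpr hm
    have he : Real.sqrt 2 = ((n / m : ℚ) : ℝ) := by
      push_cast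
      field_simp
      linarith [h]
    exact (Rat.not_irrational _) (he ▸ irrational_sqrt_two)
  refine ⟨hm, ?_⟩
  have : ((n:ℤ):ℝ) = 0 := by rw [← h, hm]; push_cast; ring
  exact_mod_cast this

lemma third (a a₂ b b₂ p₁ p₂ : ℤ)
    (h : ((a:ℝ) + a₂/Real.sqrt 2) / Real.sqrt 2 + ((b:ℝ)+b₂/Real.sqrt 2)/Real.sqrt 2
      = p₁ + p₂/Real.sqrt 2) : a₂ + b₂ = 2 * p₁ ∧ a + b = p₂ := by
  have hs : Real.sqrt 2 ≠ 0 := by positivity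
  have h2 : Real.sqrt 2 * Real.sqrt 2 = 2 := Real.mul_self_sqrt (by norm_num)
  field_simp at h
  have key : ((a₂ + b₂ - 2*p₁ : ℤ):ℝ) * Real.sqrt 2 = ((2*p₂ - 2*a - 2*b : ℤ):ℝ) := by
    push_cast
    linear_combination Real.sqrt 2 * h - ((a:ℝ) + b - p₂ - Real.sqrt 2 * p₁) * h2
  obtain ⟨u, v⟩ := sqrt2_lin _ _ key
  exact ⟨by omega, by omega⟩

lemma rep_mul (a a' b b' x₁ x₂ y₁ y₂ k : ℤ)
    (hk : a' * x₂ + b' * y₂ = 2 * k) :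
    ((a:ℝ) + a' / Real.sqrt 2) * (x₁ + x₂ / Real.sqrt 2)
      + ((b:ℝ) + b' / Real.sqrt 2) * (y₁ + y₂ / Real.sqrt 2)
    = ((a*x₁ + b*y₁ + k : ℤ):ℝ)
      + ((a*x₂ + a'*x₁ + b*y₂ + b'*y₁ : ℤ):ℝ) / Real.sqrt 2 := by
  have hs : Real.sqrt 2 ≠ 0 := by positivity
  have h2 : Real.sqrt 2 * Real.sqrt 2 = 2 := Real.mul_self_sqrt (by norm_num)
  have hk' : (a':ℝ) * x₂ + b' * y₂ = 2 * k := by exact_mod_cast hk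
  have e : ∀ x : ℝ, x / Real.sqrt 2 = x * Real.sqrt 2 / 2 := by
    intro x
    rw [div_eq_div_iff hs (by norm_num)]
    linear_combination (-x) * h2
  push_cast
  simp only [e]
  linear_combination (((a':ℝ) * x₂ + b' * y₂) / 4) * h2 + (1/2 : ℝ) * hk'

/-- Characterization of grid operators: a real 2×2 matrix maps Z[ω] ⊆ ℝ² into
    itself iff its entries have the form a + a'/√2 with the stated parity
    conditions. -/
theorem stmt10 (G : Matrix (Fin 2) (Fin 2) ℝ) :
    (∀ u ∈ Zomega2, G *ᵥ u ∈ Zomega2) ↔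
    ∃ a b c d a' b' c' d' : ℤ,
      G 0 0 = (a : ℝ) + (a' : ℝ) / Real.sqrt 2 ∧
      G 0 1 = (b : ℝ) + (b' : ℝ) / Real.sqrt 2 ∧
      G 1 0 = (c : ℝ) + (c' : ℝ) / Real.sqrt 2 ∧
      G 1 1 = (d : ℝ) + (d' : ℝ) / Real.sqrt 2 ∧
      (a + b + c + d) % 2 = 0 ∧
      a' % 2 = b' % 2 ∧ b' % 2 = c' % 2 ∧ c' % 2 = d' % 2 := by
  constructor
  · intro h
    obtain ⟨a, a₂, c, c₂, ha, hc, hac⟩ :=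
      h ![(1:ℝ), 0] ⟨1, 0, 0, 0, by norm_num, by norm_num, rfl⟩
    have e1 : (G *ᵥ ![(1:ℝ), 0]) 0 = G 0 0 := by
      simp [Matrix.mulVec, dotProduct, Fin.sum_univ_two]
    have e1' : (G *ᵥ ![(1:ℝ), 0]) 1 = G 1 0 := by
      simp [Matrix.mulVec, dotProduct, Fin.sum_univ_two]
    rw [e1] at ha; rw [e1'] at hc
    obtain ⟨b, b₂, d, d₂, hb, hd, hbd⟩ :=
      h ![(0:ℝ), 1] ⟨0, 0, 1, 0, by norm_num, by norm_num, rfl⟩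
    have e2 : (G *ᵥ ![(0:ℝ), 1]) 0 = G 0 1 := by
      simp [Matrix.mulVec, dotProduct, Fin.sum_univ_two]
    have e2' : (G *ᵥ ![(0:ℝ), 1]) 1 = G 1 1 := by
      simp [Matrix.mulVec, dotProduct, Fin.sum_univ_two]
    rw [e2] at hb; rw [e2'] at hd
    have hmem : (![(Real.sqrt 2)⁻¹, (Real.sqrt 2)⁻¹]) ∈ Zomega2 :=
      ⟨0, 1, 0, 1, by norm_num [one_div], by norm_num [one_div], rfl⟩
    obtain ⟨p₁, p₂, q₁, q₂, hp, hq, hpq⟩ := h _ hmem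
    have e3 : (G *ᵥ ![(Real.sqrt 2)⁻¹, (Real.sqrt 2)⁻¹]) 0
        = G 0 0 / Real.sqrt 2 + G 0 1 / Real.sqrt 2 := by
      simp [Matrix.mulVec, dotProduct, Fin.sum_univ_two, div_eq_mul_inv]
    have e3' : (G *ᵥ ![(Real.sqrt 2)⁻¹, (Real.sqrt 2)⁻¹]) 1
        = G 1 0 / Real.sqrt 2 + G 1 1 / Real.sqrt 2 := by
      simp [Matrix.mulVec, dotProduct, Fin.sum_univ_two, div_eq_mul_inv]
    rw [e3, ha, hb] at hp
    rw [e3', hc, hd] at hq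
    obtain ⟨f1, f2⟩ := third a a₂ b b₂ p₁ p₂ hp
    obtain ⟨g1, g2⟩ := third c c₂ d d₂ q₁ q₂ hq
    exact ⟨a, b, c, d, a₂, b₂, c₂, d₂, ha, hb, hc, hd,
      by omega, by omega, by omega, by omega⟩
  · rintro ⟨a, b, c, d, a', b', c', d', ha, hb, hc, hd, hpar, hab, hbc, hcd⟩
      u ⟨x₁, x₂, y₁, y₂, hu0, hu1, hxy⟩
    obtain ⟨s, hbs⟩ : ∃ s, b' = a' + 2*s := ⟨(b'-a')/2, by omega⟩
    obtain ⟨r, hrr⟩ : ∃ r, c' = a' + 2*r := ⟨(c'-a')/2, by omega⟩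
    obtain ⟨s₂, hss⟩ : ∃ s₂, d' = a' + 2*s₂ := ⟨(d'-a')/2, by omega⟩
    obtain ⟨t, hts⟩ : ∃ t, y₂ = x₂ + 2*t := ⟨(y₂-x₂)/2, by omega⟩
    obtain ⟨m, hms⟩ : ∃ m, a+b+c+d = 2*m := ⟨(a+b+c+d)/2, by omega⟩
    have hk₀ : a'*x₂ + b'*y₂ = 2*(a'*x₂ + a'*t + s*x₂ + 2*s*t) := by
      rw [hbs, hts]; ring
    have hk₁ : c'*x₂ + d'*y₂ = 2*(a'*x₂ + a'*t + r*x₂ + s₂*x₂ + 2*s₂*t) := by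
      rw [hrr, hss, hts]; ring
    have e0 : (G *ᵥ u) 0 = G 0 0 * u 0 + G 0 1 * u 1 := by
      simp [Matrix.mulVec, dotProduct, Fin.sum_univ_two]
    have e1 : (G *ᵥ u) 1 = G 1 0 * u 0 + G 1 1 * u 1 := by
      simp [Matrix.mulVec, dotProduct, Fin.sum_univ_two]
    refine ⟨a*x₁ + b*y₁ + (a'*x₂ + a'*t + s*x₂ + 2*s*t),
            a*x₂ + a'*x₁ + b*y₂ + b'*y₁,
            c*x₁ + d*y₁ + (a'*x₂ + a'*t + r*x₂ + s₂*x₂ + 2*s₂*t),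
            c*x₂ + c'*x₁ + d*y₂ + d'*y₁, ?_, ?_, ?_⟩
    · rw [e0, ha, hb, hu0, hu1]
      have := rep_mul a a' b b' x₁ x₂ y₁ y₂ _ hk₀
      push_cast at this ⊢
      linarith [this]
    · rw [e1, hc, hd, hu0, hu1]
      have := rep_mul c c' d d' x₁ x₂ y₁ y₂ _ hk₁
      push_cast at this ⊢
      linarith [this]
    · have hdiff : (a*x₂ + a'*x₁ + b*y₂ + b'*y₁) - (c*x₂ + c'*x₁ + d*y₂ + d'*y₁)
          = 2*((m-c-d)*x₂ + (b-d)*t - r*x₁ + (s-s₂)*y₁) := by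
        rw [hbs, hrr, hss, hts]
        linear_combination x₂ * hms
      omega
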